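/- arXiv:2011.06434 — 6 statements merged into one kernel-verified Lean document; each statement's English description precedes it below -/
import Mathlib

section
/- Let H be a complex inner product space, let X₊, X₋, V : H → H be linear maps, let K, η be real numbers and k an integer. Suppose ⟨X₊ a, b⟩ = −⟨a, X₋ b⟩ for all a, b ∈ H, that X₊∘X₋ − X₋∘X₊ = (i K/2)·V, and that u ∈ H satisfies V u = i k·u and (−4·X₊∘X₋ + i K·V − K·V∘V) u = η·u. Then ‖X₊ u‖² = (1/4)(η − K k − K k²)·‖u‖² and ‖X₋ u‖² = (1/4)(η + K k − K k²)·‖u‖². -/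
open scoped ComplexInnerProductSpace

/-- norm identities (equation (2.1) of the paper) for the ladder operators:
if `⟨X₊a, b⟩ = −⟨a, X₋b⟩`, `[X₊, X₋] = (iK/2)·V`, `Vu = ik·u` and
`(−4X₊X₋ + iK·V − K·V²)u = ηu`, then `‖X₊u‖² = (1/4)(η − Kk − Kk²)‖u‖²` and
`‖X₋u‖² = (1/4)(η + Kk − Kk²)‖u‖²`. -/
theorem ladder_norms {H : Type*} [NormedAddCommGroup H] [InnerProductSpace ℂ H]
    (Xp Xm V : H →ₗ[ℂ] H) (K η : ℝ) (k : ℤ)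
    (hadj : ∀ a b : H, ⟪Xp a, b⟫ = -⟪a, Xm b⟫)
    (hcomm : Xp ∘ₗ Xm - Xm ∘ₗ Xp = ((Complex.I * (K : ℂ)) / 2) • V)
    (u : H)
    (hV : V u = (Complex.I * (k : ℂ)) • u)
    (hΩ : (-((4 : ℂ) • (Xp ∘ₗ Xm)) + (Complex.I * (K : ℂ)) • V - (K : ℂ) • (V ∘ₗ V)) u
        = (η : ℂ) • u) :
    ‖Xp u‖ ^ 2 = (1 / 4) * (η - K * (k : ℝ) - K * (k : ℝ) ^ 2) * ‖u‖ ^ 2 ∧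
    ‖Xm u‖ ^ 2 = (1 / 4) * (η + K * (k : ℝ) - K * (k : ℝ) ^ 2) * ‖u‖ ^ 2 := by
  have hI : Complex.I * Complex.I = -1 := Complex.I_mul_I
  have hΩ' : -((4 : ℂ) • Xp (Xm u)) + (Complex.I * K) • ((Complex.I * k) • u)
      - (K : ℂ) • ((Complex.I * k) • ((Complex.I * k) • u)) = (η : ℂ) • u := by
    have := hΩ
    simp only [LinearMap.sub_apply, LinearMap.add_apply, LinearMap.smul_apply,
      LinearMap.comp_apply, LinearMap.neg_apply, hV, map_smul] at this ⊢
    convert this using 3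
  have hpm : Xp (Xm u) = (((-η - K * (k:ℝ) + K * (k:ℝ)^2) / 4 : ℝ) : ℂ) • u := by
    push_cast
    linear_combination (norm := module) (-(1:ℂ)/4 : ℂ) • hΩ' +
      ((K:ℂ)*k/4) • hI • u + (-(K:ℂ)*k^2/4) • hI • u
  have hcomm' : Xp (Xm u) - Xm (Xp u) = (Complex.I * K / 2) • ((Complex.I * k) • u) := by
    have := congrArg (fun f : H →ₗ[ℂ] H => f u) hcomm
    simpa [LinearMap.sub_apply, LinearMap.smul_apply, LinearMap.comp_apply, hV] using this
  have hmp : Xm (Xp u) = (((-η + K * (k:ℝ) + K * (k:ℝ)^2) / 4 : ℝ) : ℂ) • u := by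
    push_cast
    push_cast at hpm
    linear_combination (norm := module) hpm - hcomm' + (-(K:ℂ)*k/2) • hI • u
  have huu : ⟪u, u⟫ = ((‖u‖ ^ 2 : ℝ) : ℂ) := by
    rw [inner_self_eq_norm_sq_to_K]; norm_cast
  have key : ∀ (x : H) (c : ℝ), ⟪x, x⟫ = (c : ℂ) → ‖x‖ ^ 2 = c := by
    intro x c h
    have h2 : ((‖x‖ : ℂ)) ^ 2 = (c : ℂ) := by
      rw [← h, inner_self_eq_norm_sq_to_K]; norm_cast
    exact_mod_cast h2
  constructor
  · refine key _ _ ?_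
    rw [hadj, hmp, inner_smul_right, huu]
    push_cast
    ring
  · refine key _ _ ?_
    have h := hadj (Xm u) u
    rw [hpm, inner_smul_left, huu, Complex.conj_ofReal] at h
    push_cast at h ⊢
    linear_combination h
end

section
/- Let H be a complex inner product space, let X₊, X₋, V : H → H be linear maps, let K, η be real numbers and k an integer. Suppose ⟨X₊ a, b⟩ = −⟨a, X₋ b⟩ for all a, b ∈ H, that X₊∘X₋ − X₋∘X₊ = (i K/2)·V, and that u ∈ H is nonzero with V u = i k·u and (−4·X₊∘X₋ + i K·V − K·V∘V) u = η·u. Then η + K k − K k² ≥ 0 and η − K k − K k² ≥ 0; moreover, if η − K k − K k² > 0 then X₊ u ≠ 0, and if η + K k − K k² > 0 then X₋ u ≠ 0. -/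
open scoped ComplexInnerProductSpace


private lemma inner_self_ofReal {H : Type*} [NormedAddCommGroup H] [InnerProductSpace ℂ H]
    (x : H) : (⟪x, x⟫ : ℂ) = ((‖x‖ ^ 2 : ℝ) : ℂ) := by
  rw [inner_self_eq_norm_sq_to_K]; norm_cast

/-- if `⟨X₊a, b⟩ = −⟨a, X₋b⟩`, `[X₊, X₋] = (iK/2)·V`, and `u ≠ 0`
satisfies `Vu = ik·u` and `(−4X₊X₋ + iK·V − K·V²)u = ηu`, then
`η + Kk − Kk² ≥ 0` and `η − Kk − Kk² ≥ 0`; moreover `η − Kk − Kk² > 0` forces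
`X₊u ≠ 0` and `η + Kk − Kk² > 0` forces `X₋u ≠ 0`. -/
theorem ladder_injectivity {H : Type*} [NormedAddCommGroup H] [InnerProductSpace ℂ H]
    (Xp Xm V : H →ₗ[ℂ] H) (K η : ℝ) (k : ℤ)
    (hadj : ∀ a b : H, ⟪Xp a, b⟫ = -⟪a, Xm b⟫)
    (hcomm : Xp ∘ₗ Xm - Xm ∘ₗ Xp = ((Complex.I * (K : ℂ)) / 2) • V)
    (u : H) (hu : u ≠ 0)
    (hV : V u = (Complex.I * (k : ℂ)) • u)
    (hΩ : (-((4 : ℂ) • (Xp ∘ₗ Xm)) + (Complex.I * (K : ℂ)) • V - (K : ℂ) • (V ∘ₗ V)) u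
        = (η : ℂ) • u) :
    0 ≤ η + K * (k : ℝ) - K * (k : ℝ) ^ 2 ∧
    0 ≤ η - K * (k : ℝ) - K * (k : ℝ) ^ 2 ∧
    (0 < η - K * (k : ℝ) - K * (k : ℝ) ^ 2 → Xp u ≠ 0) ∧
    (0 < η + K * (k : ℝ) - K * (k : ℝ) ^ 2 → Xm u ≠ 0) := by
  have hVV : V (V u) = (-(((k:ℂ)) ^ 2)) • u := by
    rw [hV, map_smul, hV, smul_smul]
    congr 1
    have hI : Complex.I * Complex.I = -1 := Complex.I_mul_I
    linear_combination (k:ℂ)^2 * hI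
  have h1 : Xp (Xm u) = ((-(η : ℂ) - (K:ℂ) * (k:ℂ) + (K:ℂ) * (k:ℂ) ^ 2) / 4) • u := by
    have h := hΩ
    simp only [LinearMap.sub_apply, LinearMap.add_apply, LinearMap.smul_apply,
      LinearMap.comp_apply, LinearMap.neg_apply, hV, hVV, map_smul, smul_smul] at h
    have h4 : (4 : ℂ) • Xp (Xm u)
        = (-(η : ℂ) - (K:ℂ) * (k:ℂ) + (K:ℂ) * (k:ℂ) ^ 2) • u := by
      have h5 : (4 : ℂ) • Xp (Xm u)
          = (Complex.I * (K:ℂ) * (Complex.I * (k:ℂ))) • u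
            - ((K:ℂ) * (Complex.I * (k:ℂ) * (Complex.I * (k:ℂ)))) • u
            - (η:ℂ) • u := by
        rw [← h]; abel
      rw [h5, ← sub_smul, ← sub_smul]
      congr 1
      have hI : Complex.I * Complex.I = -1 := Complex.I_mul_I
      linear_combination ((K:ℂ) * (k:ℂ) - (K:ℂ) * (k:ℂ)^2) * hI
    have := congrArg (fun x => (4 : ℂ)⁻¹ • x) h4
    simpa [smul_smul, div_eq_inv_mul, mul_comm] using this
  have h2 : Xm (Xp u) = ((-(η : ℂ) + (K:ℂ) * (k:ℂ) + (K:ℂ) * (k:ℂ) ^ 2) / 4) • u := by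
    have hc := congrArg (fun f : H →ₗ[ℂ] H => f u) hcomm
    simp only [LinearMap.sub_apply, LinearMap.smul_apply, LinearMap.comp_apply, hV,
      smul_smul] at hc
    have hrw : Xm (Xp u) = Xp (Xm u) - (Complex.I * (K:ℂ) / 2 * (Complex.I * (k:ℂ))) • u := by
      rw [← hc]; abel
    rw [hrw, h1, ← sub_smul]
    congr 1
    have hI : Complex.I * Complex.I = -1 := Complex.I_mul_I
    linear_combination (-(K:ℂ) * (k:ℂ) / 2) * hI
  have hu2 : (0 : ℝ) < ‖u‖ ^ 2 := pow_pos (norm_pos_iff.mpr hu) 2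
  have hnXp : ‖Xp u‖ ^ 2 = (η - K * (k:ℝ) - K * (k:ℝ) ^ 2) / 4 * ‖u‖ ^ 2 := by
    have e1 : (⟪Xp u, Xp u⟫ : ℂ) = -⟪u, Xm (Xp u)⟫ := hadj u (Xp u)
    rw [h2, inner_smul_right, inner_self_ofReal, inner_self_ofReal] at e1
    have e2 : ((‖Xp u‖ ^ 2 : ℝ) : ℂ)
        = (((η - K * (k:ℝ) - K * (k:ℝ) ^ 2) / 4 * ‖u‖ ^ 2 : ℝ) : ℂ) := by
      push_cast at e1 ⊢
      linear_combination e1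
    exact_mod_cast e2
  have hnXm : ‖Xm u‖ ^ 2 = (η + K * (k:ℝ) - K * (k:ℝ) ^ 2) / 4 * ‖u‖ ^ 2 := by
    have e1 : (⟪Xp (Xm u), u⟫ : ℂ) = -⟪Xm u, Xm u⟫ := hadj (Xm u) u
    rw [h1, inner_smul_left, inner_self_ofReal, inner_self_ofReal] at e1
    have hst : (starRingEnd ℂ) ((-(η:ℂ) - (K:ℂ) * (k:ℂ) + (K:ℂ) * (k:ℂ) ^ 2) / 4)
        = ((-(η:ℂ) - (K:ℂ) * (k:ℂ) + (K:ℂ) * (k:ℂ) ^ 2) / 4) := by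
      simp [map_div₀, map_sub, map_add, map_mul, map_neg, Complex.conj_ofReal, map_ofNat]
    rw [hst] at e1
    have e2 : ((‖Xm u‖ ^ 2 : ℝ) : ℂ)
        = (((η + K * (k:ℝ) - K * (k:ℝ) ^ 2) / 4 * ‖u‖ ^ 2 : ℝ) : ℂ) := by
      push_cast at e1 ⊢
      linear_combination e1
    exact_mod_cast e2
  have hXpnn : (0 : ℝ) ≤ ‖Xp u‖ ^ 2 := by positivity
  have hXmnn : (0 : ℝ) ≤ ‖Xm u‖ ^ 2 := by positivity
  refine ⟨?_, ?_, ?_, ?_⟩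
  · nlinarith
  · nlinarith
  · intro hpos hz
    rw [hz] at hnXp
    simp only [norm_zero, ne_eq] at hnXp
    nlinarith
  · intro hpos hz
    rw [hz] at hnXm
    simp only [norm_zero, ne_eq] at hnXm
    nlinarith
end

section
/- Let H be a complex inner product space and let X₊, X₋ : H → H be linear maps with ⟨X₊ a, b⟩ = −⟨a, X₋ b⟩ for all a, b ∈ H. Let f, g ∈ H with ⟨f, g⟩ = 0, let l be a natural number, and suppose there are complex scalars c₀, …, c_{l−1} such that X₋(X₊(X₊ʲ f)) = cⱼ · X₊ʲ f and X₋(X₊(X₊ʲ g)) = cⱼ · X₊ʲ g for every j with 0 ≤ j < l (where X₊ʲ denotes j-fold application of X₊). Then ⟨X₊ˡ f, X₊ˡ g⟩ = 0. -/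
open scoped ComplexInnerProductSpace

/-- orthogonality propagation along ladder orbits: if
`⟨X₊a, b⟩ = −⟨a, X₋b⟩`, `⟨f, g⟩ = 0`, and `X₋X₊` acts by the same scalar `cⱼ` on
`X₊ʲf` and `X₊ʲg` for all `j < l`, then `⟨X₊ˡf, X₊ˡg⟩ = 0`. -/
theorem ladder_orbit_orthogonality {H : Type*} [NormedAddCommGroup H] [InnerProductSpace ℂ H]
    (Xp Xm : H →ₗ[ℂ] H)
    (hadj : ∀ a b : H, ⟪Xp a, b⟫ = -⟪a, Xm b⟫)
    (f g : H) (hfg : ⟪f, g⟫ = 0) (l : ℕ) (c : ℕ → ℂ)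
    (hf : ∀ j < l, Xm (Xp ((Xp ^ j) f)) = c j • (Xp ^ j) f)
    (hg : ∀ j < l, Xm (Xp ((Xp ^ j) g)) = c j • (Xp ^ j) g) :
    ⟪(Xp ^ l) f, (Xp ^ l) g⟫ = 0 := by
  induction l with
  | zero => simpa using hfg
  | succ n ih =>
    have ihn := ih (fun j hj => hf j (Nat.lt_succ_of_lt hj))
      (fun j hj => hg j (Nat.lt_succ_of_lt hj))
    have h1 : (Xp ^ (n + 1)) f = Xp ((Xp ^ n) f) := by
      rw [pow_succ']; rfl
    have h2 : (Xp ^ (n + 1)) g = Xp ((Xp ^ n) g) := by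
      rw [pow_succ']; rfl
    rw [h1, h2, hadj, hg n (Nat.lt_succ_self n), inner_smul_right, ihn, mul_zero, neg_zero]
end

section
/- Let H be a complex inner product space and k ≥ 1 a natural number. For 0 ≤ n ≤ k let T⁽ⁿ⁾ : H → H be linear maps, μ⁽ⁿ⁾ complex scalars, and φ⁽ⁿ⁾ ∈ H vectors. Assume: (i) T⁽⁰⁾ is symmetric, i.e. ⟨T⁽⁰⁾a, b⟩ = ⟨a, T⁽⁰⁾b⟩ for all a, b; (ii) T⁽⁰⁾φ⁽⁰⁾ = μ⁽⁰⁾φ⁽⁰⁾ with ‖φ⁽⁰⁾‖ = 1; (iii) for every l with 1 ≤ l ≤ k, Σ_{n=0}^{l} (T⁽ⁿ⁾φ⁽ˡ⁻ⁿ⁾ − μ⁽ⁿ⁾·φ⁽ˡ⁻ⁿ⁾) = 0. Then μ⁽ᵏ⁾ = ⟨T⁽ᵏ⁾φ⁽⁰⁾, φ⁽⁰⁾⟩ + Σ_{n=1}^{k−1} ⟨T⁽ⁿ⁾φ⁽ᵏ⁻ⁿ⁾ − μ⁽ⁿ⁾·φ⁽ᵏ⁻ⁿ⁾, φ⁽⁰⁾⟩.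 -/
open scoped ComplexInnerProductSpace

/-- the `k`-th Taylor coefficient formula of Section 2.3. The paper's
inner product `⟨a, b⟩` is linear in the *first* argument, while Mathlib's `⟪·, ·⟫`
is linear in the *second*; hence `⟨a, b⟩_paper = ⟪b, a⟫_Mathlib` and the paper's
`⟨T⁽ᵏ⁾φ⁽⁰⁾, φ⁽⁰⁾⟩` is rendered `⟪φ 0, T k (φ 0)⟫`. -/
theorem taylor_coefficient_formula {H : Type*} [NormedAddCommGroup H] [InnerProductSpace ℂ H]
    (k : ℕ) (hk : 1 ≤ k)
    (T : ℕ → H →ₗ[ℂ] H) (μ : ℕ → ℂ) (φ : ℕ → H)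
    (hsym : ∀ a b : H, ⟪T 0 a, b⟫ = ⟪a, T 0 b⟫)
    (heig : T 0 (φ 0) = μ 0 • φ 0) (hnorm : ‖φ 0‖ = 1)
    (hrec : ∀ l, 1 ≤ l → l ≤ k →
      ∑ n ∈ Finset.range (l + 1), (T n (φ (l - n)) - μ n • φ (l - n)) = 0) :
    μ k = ⟪φ 0, T k (φ 0)⟫ +
      ∑ n ∈ Finset.Icc 1 (k - 1), ⟪φ 0, T n (φ (k - n)) - μ n • φ (k - n)⟫ := by
  have hself : ⟪φ 0, φ 0⟫ = (1 : ℂ) := by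
    rw [inner_self_eq_norm_sq_to_K, hnorm]; norm_num
  have hμ0 : (starRingEnd ℂ) (μ 0) = μ 0 := by
    have := hsym (φ 0) (φ 0)
    rw [heig, inner_smul_left, inner_smul_right, hself] at this
    simpa using this
  -- take inner product of the recursion at l = k with φ 0
  have h := congrArg (fun v => (inner ℂ (φ 0) v : ℂ)) (hrec k hk le_rfl)
  simp only [inner_sum, inner_zero_right] at h
  set f : ℕ → ℂ := fun n => ⟪φ 0, T n (φ (k - n)) - μ n • φ (k - n)⟫ with hf
  have hsplit : ∑ n ∈ Finset.range (k + 1), f n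
      = f 0 + (∑ n ∈ Finset.Icc 1 (k - 1), f n + f k) := by
    rw [Finset.sum_range_succ', add_comm]
    congr 1
    obtain ⟨m, rfl⟩ := Nat.exists_eq_add_of_le hk
    rw [add_comm 1 m, Finset.sum_range_succ]
    congr 1
    rw [Nat.add_sub_cancel, ← Finset.Ico_add_one_right_eq_Icc, Finset.sum_Ico_eq_sum_range]
    simp [add_comm]
  have hf0 : f 0 = 0 := by
    have hs := hsym (φ 0) (φ (k - 0))
    rw [heig, inner_smul_left, hμ0] at hs
    simp only [hf, inner_sub_right, inner_smul_right, ← hs]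
    ring
  have hfk : f k = ⟪φ 0, T k (φ 0)⟫ - μ k := by
    simp [hf, inner_sub_right, inner_smul_right, hself, hnorm]
  have h' : ∑ n ∈ Finset.range (k + 1), f n = 0 := h
  rw [hsplit, hf0, hfk] at h'
  linear_combination -h'
end

section
/- Let H be a complex inner product space, let X₊, X₋, V : H → H be linear maps, and let K, η be real numbers. Assume: (i) V is skew-symmetric, ⟨V a, b⟩ = −⟨a, V b⟩ for all a, b; (ii) V∘X₊ − X₊∘V = i·X₊ and V∘X₋ − X₋∘V = −i·X₋; (iii) φ ∈ H satisfies ‖φ‖ = 1, V φ = 0, and (−2·X₊∘X₋ − 2·X₋∘X₊ − K·V∘V) φ = η·φ. Then −2·⟨(X₊ + X₋)((X₊ + X₋)φ), φ⟩ = η. -/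
open scoped ComplexInnerProductSpace

/-- the second-order coefficient equals the Casimir eigenvalue: if `V` is
skew-symmetric, `[V, X₊] = i·X₊`, `[V, X₋] = −i·X₋`, and the unit vector `φ` satisfies
`Vφ = 0` and `(−2X₊X₋ − 2X₋X₊ − K·V²)φ = ηφ`, then `−2·⟨(X₊+X₋)²φ, φ⟩ = η`. -/
theorem second_order_equals_eigenvalue {H : Type*}
    [NormedAddCommGroup H] [InnerProductSpace ℂ H]
    (Xp Xm V : H →ₗ[ℂ] H) (K η : ℝ)
    (hskew : ∀ a b : H, ⟪V a, b⟫ = -⟪a, V b⟫)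
    (hp : V ∘ₗ Xp - Xp ∘ₗ V = Complex.I • Xp)
    (hm : V ∘ₗ Xm - Xm ∘ₗ V = -(Complex.I • Xm))
    (φ : H) (hnorm : ‖φ‖ = 1) (hφ : V φ = 0)
    (hΩ : (-((2 : ℂ) • (Xp ∘ₗ Xm)) - (2 : ℂ) • (Xm ∘ₗ Xp) - (K : ℂ) • (V ∘ₗ V)) φ
        = (η : ℂ) • φ) :
    (-2 : ℂ) * ⟪(Xp + Xm) ((Xp + Xm) φ), φ⟫ = (η : ℂ) := by
  -- V (Xp φ) = I • Xp φ
  have hp' : ∀ x : H, V (Xp x) = Xp (V x) + Complex.I • Xp x := by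
    intro x
    have := congrFun (congrArg DFunLike.coe hp) x
    simp only [LinearMap.sub_apply, LinearMap.comp_apply, LinearMap.smul_apply] at this
    linear_combination (norm := module) this
  have hm' : ∀ x : H, V (Xm x) = Xm (V x) - Complex.I • Xm x := by
    intro x
    have := congrFun (congrArg DFunLike.coe hm) x
    simp only [LinearMap.sub_apply, LinearMap.comp_apply, LinearMap.neg_apply,
      LinearMap.smul_apply] at this
    linear_combination (norm := module) this
  have hVp : V (Xp φ) = Complex.I • Xp φ := by rw [hp', hφ, map_zero, zero_add]
  have hVm : V (Xm φ) = -(Complex.I • Xm φ) := by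
    rw [hm', hφ, map_zero, zero_sub]
  have hVpp : V (Xp (Xp φ)) = (2 * Complex.I) • Xp (Xp φ) := by
    rw [hp' (Xp φ), hVp, map_smul]
    module
  have hVmm : V (Xm (Xm φ)) = -((2 * Complex.I) • Xm (Xm φ)) := by
    rw [hm' (Xm φ), hVm, map_neg, map_smul]
    module
  -- ⟨Xp² φ, φ⟩ = 0
  have hpp0 : ⟪Xp (Xp φ), φ⟫ = 0 := by
    have h := hskew (Xp (Xp φ)) φ
    rw [hVpp, hφ, inner_zero_right, neg_zero, inner_smul_left] at h
    have : (starRingEnd ℂ) (2 * Complex.I) ≠ 0 := by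
      simp [Complex.ext_iff]
    exact (mul_eq_zero.mp h).resolve_left this
  have hmm0 : ⟪Xm (Xm φ), φ⟫ = 0 := by
    have h := hskew (Xm (Xm φ)) φ
    rw [hVmm, hφ, inner_zero_right, neg_zero, inner_neg_left, neg_eq_zero,
      inner_smul_left] at h
    have : (starRingEnd ℂ) (2 * Complex.I) ≠ 0 := by
      simp [Complex.ext_iff]
    exact (mul_eq_zero.mp h).resolve_left this
  -- the Casimir relation at φ, using V² φ = 0
  have hΩ' : (-(2:ℂ)) • Xp (Xm φ) + (-(2:ℂ)) • Xm (Xp φ) = (η : ℂ) • φ := by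
    simp only [LinearMap.sub_apply, LinearMap.neg_apply, LinearMap.smul_apply,
      LinearMap.comp_apply, hφ, map_zero, smul_zero, sub_zero] at hΩ
    linear_combination (norm := module) hΩ
  have hinner : ⟪((-(2:ℂ)) • Xp (Xm φ) + (-(2:ℂ)) • Xm (Xp φ) : H), φ⟫ = ⟪((η:ℂ) • φ : H), φ⟫ := by
    rw [hΩ']
  rw [inner_add_left, inner_smul_left, inner_smul_left, inner_smul_left] at hinner
  have hnorm2 : ⟪φ, φ⟫ = (1 : ℂ) := by
    rw [inner_self_eq_norm_sq_to_K, hnorm]; norm_num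
  rw [hnorm2, mul_one, Complex.conj_ofReal] at hinner
  -- expand the left side
  simp only [LinearMap.add_apply, map_add, inner_add_left, hpp0, hmm0]
  have hc : (starRingEnd ℂ) (-(2:ℂ)) = -2 := by norm_num [Complex.ext_iff]
  rw [hc] at hinner
  linear_combination hinner
end

section
/- Let H be a complex inner product space, let X₊, X₋, V : H → H be linear maps, and let K, η be real numbers. Assume: (i) ⟨X₊ a, b⟩ = −⟨a, X₋ b⟩ for all a, b ∈ H; (ii) V is skew-symmetric, ⟨V a, b⟩ = −⟨a, V b⟩ for all a, b; (iii) V∘X₊ − X₊∘V = i·X₊ and V∘X₋ − X₋∘V = −i·X₋; (iv) X₊∘X₋ − X₋∘X₊ = (i K/2)·V; (v) φ ∈ H satisfies ‖φ‖ = 1, V φ = 0, and (−4·X₊∘X₋ + i K·V − K·V∘V) φ = η·φ. Then ‖(X₊ + X₋) φ‖² = η/2. -/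
open scoped ComplexInnerProductSpace

/-- the norm of the geodesic vector field on the zero Fourier mode
(Remark 4.2): if `⟨X₊a, b⟩ = −⟨a, X₋b⟩`, `V` is skew-symmetric, `[V, X₊] = i·X₊`,
`[V, X₋] = −i·X₋`, `[X₊, X₋] = (iK/2)·V`, and the unit vector `φ` satisfies `Vφ = 0`
and `(−4X₊X₋ + iK·V − K·V²)φ = ηφ`, then `‖(X₊ + X₋)φ‖² = η/2`. -/
theorem geodesic_norm_on_zero_mode {H : Type*}
    [NormedAddCommGroup H] [InnerProductSpace ℂ H]
    (Xp Xm V : H →ₗ[ℂ] H) (K η : ℝ)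
    (hadj : ∀ a b : H, ⟪Xp a, b⟫ = -⟪a, Xm b⟫)
    (hskew : ∀ a b : H, ⟪V a, b⟫ = -⟪a, V b⟫)
    (hp : V ∘ₗ Xp - Xp ∘ₗ V = Complex.I • Xp)
    (hm : V ∘ₗ Xm - Xm ∘ₗ V = -(Complex.I • Xm))
    (hcomm : Xp ∘ₗ Xm - Xm ∘ₗ Xp = ((Complex.I * (K : ℂ)) / 2) • V)
    (φ : H) (hnorm : ‖φ‖ = 1) (hφ : V φ = 0)
    (hΩ : (-((4 : ℂ) • (Xp ∘ₗ Xm)) + (Complex.I * (K : ℂ)) • V - (K : ℂ) • (V ∘ₗ V)) φ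
        = (η : ℂ) • φ) :
    ‖(Xp + Xm) φ‖ ^ 2 = η / 2 := by
  -- adjoint relation for Xm
  have hadj' : ∀ a b : H, ⟪Xm a, b⟫ = -⟪a, Xp b⟫ := by
    intro a b
    have h := hadj b a
    calc ⟪Xm a, b⟫ = starRingEnd ℂ ⟪b, Xm a⟫ := (inner_conj_symm _ _).symm
      _ = starRingEnd ℂ (-⟪Xp b, a⟫) := by rw [h, neg_neg]
      _ = -⟪a, Xp b⟫ := by rw [map_neg, inner_conj_symm]
  -- Xp Xm φ = -(η/4) φ
  have h1 : Xp (Xm φ) = (-(η / 4) : ℂ) • φ := by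
    have h := hΩ
    simp only [LinearMap.sub_apply, LinearMap.add_apply, LinearMap.smul_apply,
      LinearMap.comp_apply, LinearMap.neg_apply, hφ, map_zero, smul_zero] at h
    have hthis : -((4 : ℂ) • Xp (Xm φ)) = (η : ℂ) • φ := by
      simpa using h
    have h4 : (4 : ℂ) • Xp (Xm φ) = (-(η : ℂ)) • φ := by
      rw [neg_smul, ← hthis, neg_neg]
    calc Xp (Xm φ) = ((4 : ℂ)⁻¹ * 4) • Xp (Xm φ) := by norm_num
      _ = (4 : ℂ)⁻¹ • ((4 : ℂ) • Xp (Xm φ)) := by rw [mul_smul]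
      _ = (4 : ℂ)⁻¹ • ((-(η : ℂ)) • φ) := by rw [h4]
      _ = (-(η / 4) : ℂ) • φ := by rw [smul_smul]; congr 1; ring
  have h2 : Xm (Xp φ) = (-(η / 4) : ℂ) • φ := by
    have h := congrArg (fun f : H →ₗ[ℂ] H => f φ) hcomm
    simp only [LinearMap.sub_apply, LinearMap.comp_apply, LinearMap.smul_apply, hφ,
      smul_zero] at h
    have hXX : Xm (Xp φ) = Xp (Xm φ) := by
      rw [sub_eq_zero] at h; rw [h]
    rw [hXX, h1]
  -- eigenvector relations
  have hVp : V (Xp φ) = Complex.I • Xp φ := by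
    have h := congrArg (fun f : H →ₗ[ℂ] H => f φ) hp
    simp only [LinearMap.sub_apply, LinearMap.comp_apply, LinearMap.smul_apply, hφ,
      map_zero] at h
    simpa using h
  have hVm : V (Xm φ) = -(Complex.I • Xm φ) := by
    have h := congrArg (fun f : H →ₗ[ℂ] H => f φ) hm
    simp only [LinearMap.sub_apply, LinearMap.comp_apply, LinearMap.smul_apply, hφ,
      map_zero, LinearMap.neg_apply] at h
    simpa using h
  -- cross term vanishes
  have hcross : ⟪Xp φ, Xm φ⟫ = 0 := by
    have h := hskew (Xp φ) (Xm φ)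
    rw [hVp, hVm, inner_smul_left, inner_neg_right, inner_smul_right, Complex.conj_I] at h
    have h2I : (2 * Complex.I) * ⟪Xp φ, Xm φ⟫ = 0 := by linear_combination -h
    have hI : (2 * Complex.I) ≠ 0 := by simp [Complex.I_ne_zero]
    exact (mul_eq_zero.mp h2I).resolve_left hI
  have hcross' : ⟪Xm φ, Xp φ⟫ = 0 := by
    rw [← inner_conj_symm, hcross, map_zero]
  -- diagonal terms
  have hφφ : ⟪φ, φ⟫ = 1 := by
    rw [inner_self_eq_norm_sq_to_K, hnorm]; norm_num
  have hd1 : ⟪Xp φ, Xp φ⟫ = (η / 4 : ℂ) := by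
    rw [hadj φ (Xp φ), h2, inner_smul_right, hφφ]; ring
  have hd2 : ⟪Xm φ, Xm φ⟫ = (η / 4 : ℂ) := by
    rw [hadj' φ (Xm φ), h1, inner_smul_right, hφφ]; ring
  -- put together
  have htot : ⟪(Xp + Xm) φ, (Xp + Xm) φ⟫ = (η / 2 : ℂ) := by
    simp only [LinearMap.add_apply, inner_add_left, inner_add_right, hd1, hd2, hcross, hcross']
    ring
  have hns := inner_self_eq_norm_sq_to_K (𝕜 := ℂ) ((Xp + Xm) φ)
  rw [htot] at hns
  have hc : ((η / 2 : ℝ) : ℂ) = ((‖(Xp + Xm) φ‖ ^ 2 : ℝ) : ℂ) := by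
    push_cast; simpa using hns
  exact_mod_cast hc.symm
end
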